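/- For the Gaussian mechanism: if a query f on datasets has global ℓ₂-sensitivity Δ > 0, then the mechanism M(D) = f(D) + N(0, σ²Δ² I_d) satisfies (α, α/(2σ²))-RDP for every α > 1, since the Rényi divergence of order α between N(μ₁, σ²Δ² I) and N(μ₂, σ²Δ² I) with ‖μ₁ − μ₂‖₂ ≤ Δ is α‖μ₁−μ₂‖₂²/(2σ²Δ²) ≤ α/(2σ²). -/

import Mathlib

open MeasureTheory ProbabilityTheory
open scoped NNReal ENNReal

/-- Rényi divergence of order `α` between measures `P` and `Q`. -/
noncomputable def renyiDiv {Ω : Type*} [MeasurableSpace Ω] (α : ℝ)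
    (P Q : Measure Ω) : ℝ :=
  (α - 1)⁻¹ * Real.log (∫ x, (P.rnDeriv Q x).toReal ^ α ∂Q)

/-- The Gaussian mechanism: add independent `N(0, σ²Δ²)` noise to each
coordinate of the query output. -/
noncomputable def gaussianMechanism {Dset : Type*} {d : ℕ}
    (f : Dset → EuclideanSpace ℝ (Fin d)) (σ Δ : ℝ) (D : Dset) :
    Measure (Fin d → ℝ) :=
  Measure.pi (fun i => gaussianReal (f D i) (Real.toNNReal (σ ^ 2 * Δ ^ 2)))

open Real ENNReal in
lemma lintegral_pi_prod' : ∀ {n : ℕ} (μ : Fin n → Measure ℝ) [∀ i, SigmaFinite (μ i)]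
    (f : Fin n → ℝ → ℝ≥0∞) (_ : ∀ i, Measurable (f i)),
    ∫⁻ x, ∏ i, f i (x i) ∂Measure.pi μ = ∏ i, ∫⁻ x, f i x ∂μ i := by
  intro n
  induction n with
  | zero =>
    intro μ _ f hf
    simp [Measure.pi_of_empty]
  | succ n ih =>
    intro μ _ f hf
    have A := measurePreserving_piFinSuccAbove μ 0
    have hF' : Measurable fun y : ℝ × (Fin n → ℝ) =>
        f 0 y.1 * ∏ j : Fin n, f (Fin.succ j) (y.2 j) := by
      exact ((hf 0).comp measurable_fst).mul
        (Finset.measurable_prod _ fun j _ =>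
          (hf _).comp ((measurable_pi_apply j).comp measurable_snd))
    calc ∫⁻ x, ∏ i, f i (x i) ∂Measure.pi μ
        = ∫⁻ x, f 0 (x 0) * ∏ j : Fin n, f (Fin.succ j) (x (Fin.succ j)) ∂Measure.pi μ := by
          simp_rw [Fin.prod_univ_succ]
      _ = ∫⁻ y, f 0 y.1 * ∏ j : Fin n, f (Fin.succ j) (y.2 j)
            ∂((μ 0).prod (Measure.pi fun j => μ ((0 : Fin (n+1)).succAbove j))) := by
          rw [← A.lintegral_comp hF']
          simp only [MeasurableEquiv.piFinSuccAbove_apply, Fin.zero_succAbove]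
          rfl
      _ = (∫⁻ x, f 0 x ∂μ 0) * ∏ j : Fin n, ∫⁻ x, f (Fin.succ j) x ∂μ (Fin.succ j) := by
          have hpm := lintegral_prod_mul (μ := μ 0)
            (ν := Measure.pi fun j => μ ((0 : Fin (n+1)).succAbove j))
            ((hf 0).aemeasurable)
            (g := fun y : Fin n → ℝ => ∏ j : Fin n, f (Fin.succ j) (y j))
            ((Finset.measurable_prod _ fun j _ =>
              (hf _).comp (measurable_pi_apply j)).aemeasurable)
          rw [hpm]
          congr 1
          have hfam : (fun j : Fin n => μ ((0 : Fin (n+1)).succAbove j))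
              = fun j => μ (Fin.succ j) := by
            funext j; rw [Fin.zero_succAbove]
          rw [hfam]
          exact ih _ _ (fun j => hf _)
      _ = ∏ i, ∫⁻ x, f i x ∂μ i := (Fin.prod_univ_succ fun i => ∫⁻ x, f i x ∂μ i).symm

open Real ENNReal in
lemma indicator_pi_prod' {n : ℕ} (s : Fin n → Set ℝ) (f : Fin n → ℝ → ℝ≥0∞) (x : Fin n → ℝ) :
    (Set.pi Set.univ s).indicator (fun x => ∏ i, f i (x i)) x
      = ∏ i, (s i).indicator (f i) (x i) := by
  by_cases hx : x ∈ Set.pi Set.univ s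
  · rw [Set.indicator_of_mem hx]
    exact Finset.prod_congr rfl fun i _ =>
      (Set.indicator_of_mem (hx i (Set.mem_univ i)) _).symm
  · rw [Set.indicator_of_notMem hx]
    have : ∃ i, x i ∉ s i := by simpa [Set.mem_pi] using hx
    obtain ⟨i, hi⟩ := this
    exact (Finset.prod_eq_zero (Finset.mem_univ i)
      (Set.indicator_of_notMem hi _)).symm

open Real ENNReal in
lemma pi_withDensity' {n : ℕ} (μ : Fin n → Measure ℝ) [∀ i, SigmaFinite (μ i)]
    (f : Fin n → ℝ → ℝ≥0∞) (hf : ∀ i, Measurable (f i))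
    [∀ i, SigmaFinite ((μ i).withDensity (f i))] :
    Measure.pi (fun i => (μ i).withDensity (f i)) =
      (Measure.pi μ).withDensity (fun x => ∏ i, f i (x i)) := by
  refine Measure.pi_eq (fun s hs => ?_)
  rw [withDensity_apply _ (MeasurableSet.univ_pi hs),
    ← lintegral_indicator (MeasurableSet.univ_pi hs)]
  calc ∫⁻ x, (Set.pi Set.univ s).indicator (fun x => ∏ i, f i (x i)) x ∂Measure.pi μ
      = ∫⁻ x, ∏ i, (s i).indicator (f i) (x i) ∂Measure.pi μ := by
        simp_rw [indicator_pi_prod']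
    _ = ∏ i, ∫⁻ x, (s i).indicator (f i) x ∂μ i :=
        lintegral_pi_prod' μ _ (fun i => (hf i).indicator (hs i))
    _ = ∏ i, (μ i).withDensity (f i) (s i) := by
        refine Finset.prod_congr rfl fun i _ => ?_
        rw [lintegral_indicator (hs i), withDensity_apply _ (hs i)]

open Real ENNReal in
lemma gauss_ratio_pointwise (a b : ℝ) {v : ℝ≥0} (hv : v ≠ 0) (α : ℝ) (x : ℝ) :
    gaussianPDFReal b v x * (gaussianPDFReal a v x / gaussianPDFReal b v x) ^ α
      = Real.exp (α * (α - 1) * (a - b) ^ 2 / (2 * v)) *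
        gaussianPDFReal (b + α * (a - b)) v x := by
  have hv' : (0 : ℝ) < (v : ℝ) := NNReal.coe_pos.mpr (pos_iff_ne_zero.mpr hv)
  have hC : (0 : ℝ) < (√(2 * Real.pi * v))⁻¹ := by
    have : (0 : ℝ) < √(2 * Real.pi * v) :=
      Real.sqrt_pos.mpr (by positivity)
    positivity
  simp only [gaussianPDFReal]
  rw [mul_div_mul_left _ _ (ne_of_gt hC), ← Real.exp_sub, ← Real.exp_mul, mul_assoc,
    ← Real.exp_add]
  rw [show Real.exp (α * (α - 1) * (a - b) ^ 2 / (2 * v)) *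
      ((√(2 * Real.pi * v))⁻¹ * Real.exp (-(x - (b + α * (a - b))) ^ 2 / (2 * v)))
      = (√(2 * Real.pi * v))⁻¹ * Real.exp (α * (α - 1) * (a - b) ^ 2 / (2 * v) +
          -(x - (b + α * (a - b))) ^ 2 / (2 * v)) by rw [Real.exp_add]; ring]
  congr 1
  have h2v : (2 : ℝ) * v ≠ 0 := by positivity
  field_simp
  ring

open Real ENNReal in
lemma gauss_lintegral (a b : ℝ) {v : ℝ≥0} (hv : v ≠ 0) (α : ℝ) :
    ∫⁻ x, ENNReal.ofReal ((gaussianPDFReal a v x / gaussianPDFReal b v x) ^ α)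
        ∂gaussianReal b v
      = ENNReal.ofReal (Real.exp (α * (α - 1) * (a - b) ^ 2 / (2 * v))) := by
  have hr : Measurable fun x => (gaussianPDFReal a v x / gaussianPDFReal b v x) ^ α :=
    ((measurable_gaussianPDFReal a v).div (measurable_gaussianPDFReal b v)).pow
      measurable_const
  rw [gaussianReal_of_var_ne_zero b hv,
    lintegral_withDensity_eq_lintegral_mul _ (measurable_gaussianPDF b v)
      (g := fun x => ENNReal.ofReal ((gaussianPDFReal a v x / gaussianPDFReal b v x) ^ α))
      (ENNReal.measurable_ofReal.comp hr)]
  have hpt : ∀ x : ℝ, (gaussianPDF b v * fun x =>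
        ENNReal.ofReal ((gaussianPDFReal a v x / gaussianPDFReal b v x) ^ α)) x
      = ENNReal.ofReal (Real.exp (α * (α - 1) * (a - b) ^ 2 / (2 * v))) *
        gaussianPDF (b + α * (a - b)) v x := by
    intro x
    simp only [Pi.mul_apply, gaussianPDF]
    rw [← ENNReal.ofReal_mul (gaussianPDFReal_nonneg b v x),
      gauss_ratio_pointwise a b hv α x,
      ENNReal.ofReal_mul (Real.exp_nonneg _)]
  simp_rw [hpt]
  rw [lintegral_const_mul _ (measurable_gaussianPDF _ v),
    lintegral_gaussianPDF_eq_one _ hv, mul_one]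

open Real ENNReal in
lemma ennreal_ofReal_prod {ι : Type*} (s : Finset ι) (f : ι → ℝ) (h : ∀ i ∈ s, 0 ≤ f i) :
    ENNReal.ofReal (∏ i ∈ s, f i) = ∏ i ∈ s, ENNReal.ofReal (f i) := by
  classical
  induction s using Finset.cons_induction with
  | empty => simp
  | cons i s his ih =>
    rw [Finset.prod_cons, Finset.prod_cons,
      ENNReal.ofReal_mul (h i (Finset.mem_cons_self _ _)),
      ih (fun j hj => h j (Finset.mem_cons_of_mem hj))]

set_option maxHeartbeats 1000000 in
theorem gaussian_mechanism_rdp {Dset : Type*} {d : ℕ}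
    (Neighbor : Dset → Dset → Prop)
    (f : Dset → EuclideanSpace ℝ (Fin d)) (σ Δ : ℝ) (hσ : 0 < σ) (hΔ : 0 < Δ)
    (hsens : ∀ D D', Neighbor D D' → ‖f D - f D'‖ ≤ Δ)
    (α : ℝ) (hα : 1 < α) :
    ∀ D D', Neighbor D D' →
      renyiDiv α (gaussianMechanism f σ Δ D) (gaussianMechanism f σ Δ D') ≤
        α / (2 * σ ^ 2) := by
  intro D D' hDD'
  have hvpos : (0 : ℝ) < σ ^ 2 * Δ ^ 2 := by positivity
  set v : ℝ≥0 := Real.toNNReal (σ ^ 2 * Δ ^ 2) with hv_def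
  have hvR : (v : ℝ) = σ ^ 2 * Δ ^ 2 := Real.coe_toNNReal _ hvpos.le
  have hv : v ≠ 0 := ne_of_gt (Real.toNNReal_pos.mpr hvpos)
  set a : Fin d → ℝ := fun i => f D i with ha_def
  set b : Fin d → ℝ := fun i => f D' i with hb_def
  set r : Fin d → ℝ → ℝ :=
    fun i x => gaussianPDFReal (a i) v x / gaussianPDFReal (b i) v x with hr_def
  have hr_nonneg : ∀ i x, 0 ≤ r i x := fun i x =>
    div_nonneg (gaussianPDFReal_nonneg _ _ _) (gaussianPDFReal_nonneg _ _ _)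
  have hr_meas : ∀ i, Measurable (r i) := fun i =>
    (measurable_gaussianPDFReal _ _).div (measurable_gaussianPDFReal _ _)
  set P := gaussianMechanism f σ Δ D with hP_def
  set Q := gaussianMechanism f σ Δ D' with hQ_def
  haveI hQprob : IsProbabilityMeasure Q := by
    rw [hQ_def]; unfold gaussianMechanism; infer_instance
  haveI : ∀ i, SigmaFinite ((volume : Measure ℝ).withDensity (gaussianPDF (a i) v)) :=
    fun i => by rw [← gaussianReal_of_var_ne_zero _ hv]; infer_instance
  haveI : ∀ i, SigmaFinite ((volume : Measure ℝ).withDensity (gaussianPDF (b i) v)) :=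
    fun i => by rw [← gaussianReal_of_var_ne_zero _ hv]; infer_instance
  set g : (Fin d → ℝ) → ℝ≥0∞ := fun x => ∏ i, ENNReal.ofReal (r i (x i)) with hg_def
  have hg_meas : Measurable g :=
    Finset.measurable_prod _ fun i _ =>
      ENNReal.measurable_ofReal.comp ((hr_meas i).comp (measurable_pi_apply i))
  -- P = Q.withDensity g
  have hP' : P = (Measure.pi fun _ : Fin d => (volume : Measure ℝ)).withDensity
      (fun x => ∏ i, gaussianPDF (a i) v (x i)) := by
    rw [hP_def]
    unfold gaussianMechanism
    rw [show (fun i => gaussianReal (f D i) (Real.toNNReal (σ ^ 2 * Δ ^ 2)))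
        = fun i => (volume : Measure ℝ).withDensity (gaussianPDF (a i) v) by
      funext i; exact gaussianReal_of_var_ne_zero _ hv]
    exact pi_withDensity' _ _ (fun i => measurable_gaussianPDF _ _)
  have hQ' : Q = (Measure.pi fun _ : Fin d => (volume : Measure ℝ)).withDensity
      (fun x => ∏ i, gaussianPDF (b i) v (x i)) := by
    rw [hQ_def]
    unfold gaussianMechanism
    rw [show (fun i => gaussianReal (f D' i) (Real.toNNReal (σ ^ 2 * Δ ^ 2)))
        = fun i => (volume : Measure ℝ).withDensity (gaussianPDF (b i) v) by
      funext i; exact gaussianReal_of_var_ne_zero _ hv]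
    exact pi_withDensity' _ _ (fun i => measurable_gaussianPDF _ _)
  have hfun : ((fun x : Fin d → ℝ => ∏ i, gaussianPDF (b i) v (x i)) * g)
      = fun x => ∏ i, gaussianPDF (a i) v (x i) := by
    funext x
    rw [Pi.mul_apply, hg_def, ← Finset.prod_mul_distrib]
    refine Finset.prod_congr rfl fun i _ => ?_
    have hbpos := gaussianPDFReal_pos (b i) v (x i) hv
    simp only [gaussianPDF]
    rw [← ENNReal.ofReal_mul (gaussianPDFReal_nonneg _ _ _), hr_def,
      mul_comm (gaussianPDFReal (b i) v (x i)), div_mul_cancel₀ _ (ne_of_gt hbpos)]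
  have hmul := withDensity_mul (Measure.pi fun _ : Fin d => (volume : Measure ℝ))
      (f := fun x => ∏ i, gaussianPDF (b i) v (x i)) (g := g)
      (Finset.measurable_prod _ fun i _ =>
        (measurable_gaussianPDF _ _).comp (measurable_pi_apply i)) hg_meas
  rw [hfun] at hmul
  have hPQ : P = Q.withDensity g := by
    rw [hP', hQ', ← hmul]
  have h_rn : P.rnDeriv Q =ᵐ[Q] g := by
    rw [hPQ]
    exact Measure.rnDeriv_withDensity Q hg_meas
  -- the integral
  set S : ℝ := ∑ i, (a i - b i) ^ 2 with hS_def
  have hS_nonneg : 0 ≤ S := Finset.sum_nonneg fun i _ => sq_nonneg _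
  have hint : ∫ x, (P.rnDeriv Q x).toReal ^ α ∂Q
      = Real.exp (α * (α - 1) * S / (2 * v)) := by
    have step1 : ∫ x, (P.rnDeriv Q x).toReal ^ α ∂Q
        = ∫ x, ∏ i, (r i (x i)) ^ α ∂Q := by
      refine integral_congr_ae ?_
      filter_upwards [h_rn] with x hx
      rw [hx, hg_def]
      rw [ENNReal.toReal_prod]
      have tp : (∏ i, (ENNReal.ofReal (r i (x i))).toReal) = ∏ i, r i (x i) :=
        Finset.prod_congr rfl fun i _ => ENNReal.toReal_ofReal (hr_nonneg i (x i))
      rw [tp]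
      exact (Real.finset_prod_rpow _ _ (fun i _ => hr_nonneg i (x i)) α).symm
    rw [step1]
    have hmeas : Measurable fun x : Fin d → ℝ => ∏ i, (r i (x i)) ^ α :=
      Finset.measurable_prod _ fun i _ =>
        (((hr_meas i).comp (measurable_pi_apply i)).pow measurable_const)
    rw [integral_eq_lintegral_of_nonneg_ae
      (Filter.Eventually.of_forall fun x =>
        Finset.prod_nonneg fun i _ => Real.rpow_nonneg (hr_nonneg i (x i)) α)
      hmeas.aestronglyMeasurable]
    have step2 : ∫⁻ x, ENNReal.ofReal (∏ i, (r i (x i)) ^ α) ∂Q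
        = ENNReal.ofReal (Real.exp (α * (α - 1) * S / (2 * v))) := by
      calc ∫⁻ x, ENNReal.ofReal (∏ i, (r i (x i)) ^ α) ∂Q
          = ∫⁻ x, ∏ i, ENNReal.ofReal ((r i (x i)) ^ α) ∂Q := by
            refine lintegral_congr fun x => ?_
            exact ennreal_ofReal_prod _ _ fun i _ => Real.rpow_nonneg (hr_nonneg i (x i)) α
        _ = ∏ i, ∫⁻ x, ENNReal.ofReal ((r i x) ^ α) ∂gaussianReal (b i) v := by
            rw [hQ_def]
            unfold gaussianMechanism
            exact lintegral_pi_prod' _ _ fun i =>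
              ENNReal.measurable_ofReal.comp ((hr_meas i).pow measurable_const)
        _ = ∏ i, ENNReal.ofReal (Real.exp (α * (α - 1) * (a i - b i) ^ 2 / (2 * v))) :=
            Finset.prod_congr rfl fun i _ => gauss_lintegral (a i) (b i) hv α
        _ = ENNReal.ofReal (∏ i, Real.exp (α * (α - 1) * (a i - b i) ^ 2 / (2 * v))) :=
            (ennreal_ofReal_prod _ _ fun i _ => (Real.exp_nonneg _)).symm
        _ = ENNReal.ofReal (Real.exp (α * (α - 1) * S / (2 * v))) := by
            rw [← Real.exp_sum]
            congr 1
            rw [hS_def, Finset.mul_sum, Finset.sum_div]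
    rw [step2, ENNReal.toReal_ofReal (Real.exp_nonneg _)]
  -- conclude
  unfold renyiDiv
  rw [hint, Real.log_exp]
  have hα1 : α - 1 ≠ 0 := sub_ne_zero.mpr (ne_of_gt hα)
  have heq : (α - 1)⁻¹ * (α * (α - 1) * S / (2 * v)) = α * S / (2 * v) := by
    field_simp
  rw [heq, hvR]
  -- now: α * S / (2 * (σ^2 * Δ^2)) ≤ α / (2 * σ^2)
  have hS_le : S ≤ Δ ^ 2 := by
    have hnorm := hsens D D' hDD'
    have hnn : ‖f D - f D'‖ ^ 2 ≤ Δ ^ 2 :=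
      pow_le_pow_left₀ (norm_nonneg _) hnorm 2
    have hSnorm : S = ‖f D - f D'‖ ^ 2 := by
      rw [EuclideanSpace.norm_eq, Real.sq_sqrt (Finset.sum_nonneg fun i _ => by positivity)]
      rw [hS_def]
      refine Finset.sum_congr rfl fun i _ => ?_
      rw [ha_def, hb_def]
      simp [sq_abs]
    rw [hSnorm]
    exact hnn
  have hαpos : (0 : ℝ) < α := lt_trans one_pos hα
  rw [div_le_div_iff₀ (by positivity) (by positivity)]
  nlinarith [mul_le_mul_of_nonneg_left hS_le
    (show (0 : ℝ) ≤ α * (2 * σ ^ 2) by positivity)]
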